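/- Let ψ: C ⇢ P¹ be the birational inverse of a proper parameterization φ: P¹ → C given by u = (u₁,u₂,u₃), with ψ defined by homogeneous forms F₁, F₂ of the same degree without common factors. If T₁F₂(X) − T₂F₁(X) is irreducible, then for any bihomogeneous P(T,X) of bidegree (i,j): P(T, u(T)) = 0 in K[T₁,T₂] if and only if E(X) divides P(F₁(X), F₂(X), X), where E is the irreducible polynomial defining C. -/

import Mathlib

open MvPolynomial

private lemma aux_prime_X0 (K : Type*) [Field K] :
    Prime (X 0 : MvPolynomial (Fin 2) K) := by
  rw [← MulEquiv.prime_iff (MvPolynomial.finSuccEquiv K 1).toMulEquiv]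
  have : (MvPolynomial.finSuccEquiv K 1).toMulEquiv (X 0) = Polynomial.X := by
    simpa using MvPolynomial.finSuccEquiv_X_zero (R := K) (n := 1)
  rw [this]
  exact Polynomial.prime_X

/-- Let `u = (u₁,u₂,u₃)` properly parameterize the irreducible curve `E = 0`
(so that a polynomial vanishes on the curve iff it is divisible by `E`), with
inverse given by coprime forms `F₁, F₂` of the same degree, satisfying
`T₁F₂(u(T)) = T₂F₁(u(T))` with `(F₁(u), F₂(u)) ≠ (0,0)`, and with
`T₁F₂(X) − T₂F₁(X)` irreducible. Then for any bihomogeneous `P(T,X)` of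
bidegree `(i,j)`: `P(T, u(T)) = 0` if and only if `E(X)` divides
`P(F₁(X), F₂(X), X)`. -/
theorem stmt_14 (K : Type*) [Field K] [IsAlgClosed K] (d ν i j : ℕ)
    (u₁ u₂ u₃ : MvPolynomial (Fin 2) K)
    (hu₁ : u₁.IsHomogeneous d) (hu₂ : u₂.IsHomogeneous d)
    (hu₃ : u₃.IsHomogeneous d)
    (hucop : ∀ g : MvPolynomial (Fin 2) K, g ∣ u₁ → g ∣ u₂ → g ∣ u₃ → IsUnit g)
    (F₁ F₂ : MvPolynomial (Fin 3) K)
    (hF₁ : F₁.IsHomogeneous ν) (hF₂ : F₂.IsHomogeneous ν)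
    (hFcop : IsRelPrime F₁ F₂)
    (hrel : X 0 * aeval ![u₁, u₂, u₃] F₂ = X 1 * aeval ![u₁, u₂, u₃] F₁)
    (hFu : ¬(aeval ![u₁, u₂, u₃] F₁ = 0 ∧ aeval ![u₁, u₂, u₃] F₂ = 0))
    (E : MvPolynomial (Fin 3) K) (hE : Irreducible E)
    -- `E` defines the curve: a form vanishes along the parameterization
    -- iff it is a multiple of `E`
    (hEcurve : ∀ Q : MvPolynomial (Fin 3) K, aeval ![u₁, u₂, u₃] Q = 0 ↔ E ∣ Q)
    (hGirr : Irreducible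
      (X (Sum.inl 0) * rename Sum.inr F₂ - X (Sum.inl 1) * rename Sum.inr F₁ :
        MvPolynomial (Fin 2 ⊕ Fin 3) K))
    (P : MvPolynomial (Fin 2 ⊕ Fin 3) K)
    (hP : P.IsWeightedHomogeneous
      (Sum.elim (fun _ => ((1 : ℕ), (0 : ℕ))) (fun _ => ((0 : ℕ), (1 : ℕ))))
      (i, j)) :
    aeval (Sum.elim (fun k => X k) ![u₁, u₂, u₃]) P = 0 ↔
      E ∣ aeval (Sum.elim ![F₁, F₂] (fun k => X k)) P := by
  classical
  have hX0 : Prime (X 0 : MvPolynomial (Fin 2) K) := aux_prime_X0 K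
  have hdvd : (X 0 : MvPolynomial (Fin 2) K) ∣ aeval ![u₁, u₂, u₃] F₁ := by
    rcases hX0.2.2 (X 1) (aeval ![u₁, u₂, u₃] F₁)
        ⟨aeval ![u₁, u₂, u₃] F₂, hrel.symm⟩ with h | h
    · exact absurd (MvPolynomial.X_dvd_X.mp h) (by decide)
    · exact h
  obtain ⟨w, hw⟩ := hdvd
  have hbw : aeval ![u₁, u₂, u₃] F₂ = X 1 * w := by
    have hx : (X 0 : MvPolynomial (Fin 2) K) ≠ 0 := hX0.1
    apply mul_left_cancel₀ hx
    rw [hrel, hw]; ring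
  have hw0 : w ≠ 0 := by
    rintro rfl
    exact hFu ⟨by rw [hw, mul_zero], by rw [hbw, mul_zero]⟩
  -- the key identity
  have key : aeval ![u₁, u₂, u₃] (aeval (Sum.elim ![F₁, F₂] (fun k => X k)) P)
      = w ^ i * aeval (Sum.elim (fun k => X k) ![u₁, u₂, u₃]) P := by
    rw [← AlgHom.comp_apply, MvPolynomial.comp_aeval]
    have hv : (fun s => aeval ![u₁, u₂, u₃] (Sum.elim ![F₁, F₂] (fun k => X k) s))
        = Sum.elim ![X 0 * w, X 1 * w] ![u₁, u₂, u₃] := by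
      funext s
      rcases s with k | k
      · fin_cases k
        · simpa using hw
        · simpa using hbw
      · simp
    rw [hv, P.as_sum, map_sum, map_sum, Finset.mul_sum]
    refine Finset.sum_congr rfl fun m hm => ?_
    rw [aeval_monomial, aeval_monomial, mul_left_comm]
    congr 1
    have hm' := hP (mem_support_iff.mp hm)
    have hdeg : (∑ s ∈ m.support, m s * Sum.elim (fun _ : Fin 2 => 1) (fun _ : Fin 3 => 0) s) = i := by
      have h1 : (∑ a ∈ m.support, m a • Sum.elim (fun _ : Fin 2 => ((1:ℕ),(0:ℕ))) (fun _ : Fin 3 => ((0:ℕ),(1:ℕ))) a).1 = i := by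
        have h2 := congrArg Prod.fst hm'
        rwa [Finsupp.weight_apply, Finsupp.sum] at h2
      rw [← h1, Prod.fst_sum]
      refine Finset.sum_congr rfl fun s _ => ?_
      rcases s with k | k <;> simp
    calc (m.prod fun s k => Sum.elim ![X 0 * w, X 1 * w] ![u₁, u₂, u₃] s ^ k)
        = ∏ s ∈ m.support, (Sum.elim (fun k => X k) ![u₁, u₂, u₃] s ^ m s *
            w ^ (m s * Sum.elim (fun _ : Fin 2 => 1) (fun _ : Fin 3 => 0) s)) := by
          rw [Finsupp.prod]
          refine Finset.prod_congr rfl fun s _ => ?_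
          rcases s with k | k
          · fin_cases k <;> simp [mul_pow]
          · simp
      _ = w ^ i * (m.prod fun s k => Sum.elim (fun k => X k) ![u₁, u₂, u₃] s ^ k) := by
          rw [Finset.prod_mul_distrib, Finset.prod_pow_eq_pow_sum, hdeg, Finsupp.prod, mul_comm]
  constructor
  · intro h0
    exact (hEcurve _).mp (by rw [key, h0, mul_zero])
  · intro hdvdE
    have h := (hEcurve _).mpr hdvdE
    rw [key] at h
    rcases mul_eq_zero.mp h with h | h
    · exact absurd h (pow_ne_zero _ hw0)
    · exact h
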